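/- For every v ∈ 𝕍, the rational number val(v) lies in the closed interval [-1, 1], with val(v) = -1 only for v = [F] and val(v) = 1 only for v = [T]. -/
import Mathlib


/-- The three truth symbols F, 0 (Z), T. -/
inductive TSym : Type
  | F | Z | T
deriving DecidableEq

open TSym

/-- The operation u ≫ v on lists of symbols. -/
def lexOp (u v : List TSym) : List TSym :=
  if u = [F] ∧ v = [F] then [F]
  else if u = [T] ∧ v = [T] then [T]
  else Z :: (u ++ v)

/-- The truth domain 𝕍 as an inductive predicate. -/
inductive Vmem : List TSym → Prop
  | F : Vmem [F]
  | T : Vmem [T]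
  | op {u v : List TSym} : Vmem u → Vmem v → Vmem (lexOp u v)

def symRank : TSym → ℕ
  | F => 0 | Z => 1 | T => 2

/-- The order F < 0 < T on symbols. -/
def symLt (a b : TSym) : Prop := symRank a < symRank b

/-- Lexicographic order on lists induced by F < 0 < T. -/
def listLt (u v : List TSym) : Prop := List.Lex symLt u v

/-- Pointwise negation F ↦ T, T ↦ F, 0 ↦ 0. -/
def symNeg : TSym → TSym
  | F => T | T => F | Z => Z

def negList (v : List TSym) : List TSym := v.map symNeg

def symVal : TSym → ℚ
  | F => -1 | Z => 0 | T => 1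

/-- val([u₁,…,u_n]) = Σ symVal(u_i) · (1/3)^(i-1). -/
def val : List TSym → ℚ
  | [] => 0
  | a :: t => symVal a + val t / 3

open Classical in
/-- Lexicographic minimum. -/
noncomputable def minL (u v : List TSym) : List TSym := if listLt u v then u else v

open Classical in
/-- Lexicographic maximum. -/
noncomputable def maxL (u v : List TSym) : List TSym := if listLt u v then v else u


lemma symVal_bound (a : TSym) : -1 ≤ symVal a ∧ symVal a ≤ 1 := by
  cases a <;> simp [symVal] <;> norm_num

lemma val_bound (l : List TSym) : -(3/2) ≤ val l ∧ val l ≤ 3/2 := by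
  induction l with
  | nil => norm_num [val]
  | cons a t ih =>
    have h := symVal_bound a
    simp only [val]
    constructor <;> nlinarith [ih.1, ih.2, h.1, h.2]

open TSym in
theorem val_mem_Icc (v : List TSym) (hv : Vmem v) :
    -1 ≤ val v ∧ val v ≤ 1 ∧ (val v = -1 → v = [F]) ∧ (val v = 1 → v = [T]) := by
  induction hv with
  | F => norm_num [val, symVal]
  | T => norm_num [val, symVal]
  | @op u v hu hv ihu ihv =>
    unfold lexOp
    split
    · norm_num [val, symVal]
    · split
      · norm_num [val, symVal]
      · have h := val_bound (u ++ v)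
        simp only [val, symVal]
        refine ⟨by linarith [h.1], by linarith [h.2], ?_, ?_⟩ <;>
          intro h1 <;> exfalso <;> [linarith [h.1]; linarith [h.2]]
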